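/- arXiv:1411.7345 — 4 statements merged into one kernel-verified Lean document; each statement's English description precedes it below -/
import Mathlib

section
/- Let $A > 1$ and let $\mu$ satisfy $1 < \mu < (1+A)^2/(4A)$. Then the equation $\mu = y + A|1-y|y$ has exactly three real solutions $y_1 < y_2 < y_3$, and these satisfy $y_1 < (1+A)/(2A) < y_2 < 1 < y_3$. -/
/-- For `A > 1` and `1 < μ < (1+A)²/(4A)`, the equation `μ = y + A|1-y|y` has
exactly three solutions `y₁ < y₂ < y₃`, located as
`y₁ < (1+A)/(2A) < y₂ < 1 < y₃`. -/
theorem stommel_three_equilibria (A μ : ℝ) (hA : 1 < A)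
    (hμ1 : 1 < μ) (hμ2 : μ < (1 + A) ^ 2 / (4 * A)) :
    ∃ y₁ y₂ y₃ : ℝ, y₁ < y₂ ∧ y₂ < y₃ ∧
      (∀ y : ℝ, μ = y + A * |1 - y| * y ↔ (y = y₁ ∨ y = y₂ ∨ y = y₃)) ∧
      y₁ < (1 + A) / (2 * A) ∧ (1 + A) / (2 * A) < y₂ ∧ y₂ < 1 ∧ 1 < y₃ := by
  have hA0 : (0:ℝ) < A := by linarith
  have h2A : (0:ℝ) < 2 * A := by linarith
  have h2Ane : (2*A) ≠ 0 := ne_of_gt h2A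
  have hAne : A ≠ 0 := ne_of_gt hA0
  have hμ2' : μ * (4*A) < (1+A)^2 := (lt_div_iff₀ (by positivity)).mp hμ2
  have hD1pos : 0 < (1+A)^2 - 4*A*μ := by nlinarith
  have hD2pos : 0 < (A-1)^2 + 4*A*μ := by nlinarith
  set s1 := Real.sqrt ((1+A)^2 - 4*A*μ) with hs1def
  set s2 := Real.sqrt ((A-1)^2 + 4*A*μ) with hs2def
  have hs1 : s1^2 = (1+A)^2 - 4*A*μ := Real.sq_sqrt hD1pos.le
  have hs2 : s2^2 = (A-1)^2 + 4*A*μ := Real.sq_sqrt hD2pos.le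
  have hs1pos : 0 < s1 := Real.sqrt_pos.2 hD1pos
  have hs2pos : 0 < s2 := Real.sqrt_pos.2 hD2pos
  have hs1lt : s1 < A - 1 := by nlinarith
  have hs2gt : A + 1 < s2 := by nlinarith
  refine ⟨(1+A-s1)/(2*A), (1+A+s1)/(2*A), (A-1+s2)/(2*A), ?_, ?_, ?_, ?_, ?_, ?_, ?_⟩
  · exact (div_lt_div_iff_of_pos_right h2A).mpr (by linarith)
  · exact (div_lt_div_iff_of_pos_right h2A).mpr (by linarith)
  · intro y
    have key1 : 4*A^2*(A*y^2 - (1+A)*y + μ)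
        = A * (2*A*y - (1+A-s1)) * (2*A*y - (1+A+s1)) := by
      linear_combination A * hs1
    have key2 : 4*A^2*(A*y^2 + (1-A)*y - μ)
        = A * (2*A*y - (A-1-s2)) * (2*A*y - (A-1+s2)) := by
      linear_combination A * hs2
    constructor
    · intro h
      rcases le_or_gt y 1 with hy | hy
      · have habs : |1 - y| = 1 - y := abs_of_nonneg (by linarith)
        rw [habs] at h
        have hq : A*y^2 - (1+A)*y + μ = 0 := by linear_combination h
        have hz : A * (2*A*y - (1+A-s1)) * (2*A*y - (1+A+s1)) = 0 := by
          rw [← key1, hq]; ring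
        rcases mul_eq_zero.mp hz with hz | hz
        · rcases mul_eq_zero.mp hz with hz | hz
          · exact absurd hz hAne
          · left; field_simp; linarith
        · right; left; field_simp; linarith
      · have habs : |1 - y| = y - 1 := by
          rw [abs_of_nonpos (by linarith)]; ring
        rw [habs] at h
        have hq : A*y^2 + (1-A)*y - μ = 0 := by linear_combination -h
        have hz : A * (2*A*y - (A-1-s2)) * (2*A*y - (A-1+s2)) = 0 := by
          rw [← key2, hq]; ring
        rcases mul_eq_zero.mp hz with hz | hz
        · rcases mul_eq_zero.mp hz with hz | hz
          · exact absurd hz hAne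
          · exfalso; nlinarith
        · right; right; field_simp; linarith
    · intro h
      rcases h with h | h | h
      · subst h
        have hlt1 : (1+A-s1)/(2*A) < 1 := (div_lt_one h2A).mpr (by linarith)
        have habs : |1 - (1+A-s1)/(2*A)| = 1 - (1+A-s1)/(2*A) :=
          abs_of_nonneg (by linarith)
        rw [habs]
        field_simp
        linear_combination hs1
      · subst h
        have hlt1 : (1+A+s1)/(2*A) < 1 := (div_lt_one h2A).mpr (by linarith)
        have habs : |1 - (1+A+s1)/(2*A)| = 1 - (1+A+s1)/(2*A) :=
          abs_of_nonneg (by linarith)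
        rw [habs]
        field_simp
        linear_combination hs1
      · subst h
        have hgt1 : 1 < (A-1+s2)/(2*A) := (lt_div_iff₀ h2A).mpr (by linarith)
        have habs : |1 - (A-1+s2)/(2*A)| = (A-1+s2)/(2*A) - 1 := by
          rw [abs_of_nonpos (by linarith)]; ring
        rw [habs]
        field_simp
        linear_combination (-1) * hs2
  · exact (div_lt_div_iff_of_pos_right h2A).mpr (by linarith)
  · exact (div_lt_div_iff_of_pos_right h2A).mpr (by linarith)
  · exact (div_lt_one h2A).mpr (by linarith)
  · exact (lt_div_iff₀ h2A).mpr (by linarith)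
end

section
/- Let $A > 1$ and let $\mu \in \mathbb{R}$ satisfy either $\mu < 1$ or $\mu > (1+A)^2/(4A)$. Then the equation $\mu = y + A|1-y|y$ has exactly one real solution; if $\mu < 1$ the solution satisfies $y < (1+A)/(2A)$, and if $\mu > (1+A)^2/(4A)$ the solution satisfies $y > 1$. -/
/-- For `A > 1` and `μ` outside the bistable window `[1, (1+A)²/(4A)]`, the
equation `μ = y + A|1-y|y` has exactly one solution, located on the thermal
branch (`y < (1+A)/(2A)`) when `μ < 1` and on the haline branch (`y > 1`) when
`μ > (1+A)²/(4A)`. -/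
theorem stommel_unique_equilibrium_outside_window (A μ : ℝ) (hA : 1 < A)
    (hμ : μ < 1 ∨ (1 + A) ^ 2 / (4 * A) < μ) :
    ∃ y : ℝ, μ = y + A * |1 - y| * y ∧
      (∀ z : ℝ, μ = z + A * |1 - z| * z → z = y) ∧
      (μ < 1 → y < (1 + A) / (2 * A)) ∧
      ((1 + A) ^ 2 / (4 * A) < μ → 1 < y) := by
  have hA0 : (0:ℝ) < A := by linarith
  have h2A : (0:ℝ) < 2*A := by linarith
  have hM1 : 1 < (1 + A) ^ 2 / (4 * A) := by
    rw [lt_div_iff₀ (by linarith)]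
    nlinarith [sq_nonneg (A - 1), mul_pos (show (0:ℝ) < A - 1 by linarith) (show (0:ℝ) < A - 1 by linarith)]
  rcases hμ with hμ | hμ
  · -- case μ < 1
    have hD : 0 < (1+A)^2 - 4*A*μ := by nlinarith
    set s := Real.sqrt ((1+A)^2 - 4*A*μ) with hs
    have hs2 : s^2 = (1+A)^2 - 4*A*μ := Real.sq_sqrt hD.le
    have hspos : 0 < s := Real.sqrt_pos.mpr hD
    set y := ((1+A) - s)/(2*A) with hy
    have hylt : y < (1+A)/(2*A) := by
      rw [hy, div_lt_div_iff₀ h2A h2A]; nlinarith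
    have hy1 : y < 1 := by
      rw [hy, div_lt_one h2A]; linarith
    have hyq : 2*A*y = (1+A) - s := by
      rw [hy]; field_simp
    have key : μ = y + A * (1 - y) * y := by
      have key4 : (4*A) * μ = (4*A) * (y + A * (1 - y) * y) := by
        linear_combination hs2 + (2*A*y - (1+A) - s) * hyq
      exact mul_left_cancel₀ (by positivity) key4
    have habs : μ = y + A * |1 - y| * y := by
      rw [abs_of_nonneg (by linarith)]; exact key
    refine ⟨y, habs, ?_, fun _ => hylt, fun h => absurd h (by linarith)⟩
    intro z hz
    have hz1 : z < 1 := by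
      by_contra h
      push_neg at h
      rw [abs_of_nonpos (by linarith)] at hz
      nlinarith [mul_nonneg (sub_nonneg.mpr h) (show (0:ℝ) ≤ A*z + 1 by nlinarith)]
    rw [abs_of_nonneg (by linarith)] at hz
    have hzlt : z < (1+A)/(2*A) := by
      by_contra h
      push_neg at h
      rw [div_le_iff₀ h2A] at h
      nlinarith [mul_nonneg (show (0:ℝ) ≤ A*z - 1 by nlinarith)
        (show (0:ℝ) ≤ 1 - z by linarith)]
    have hzy : z + A*(1-z)*z = y + A*(1-y)*y := by linarith
    have hfac : (z - y) * ((1+A) - A*(z+y)) = 0 := by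
      linear_combination hzy
    have hpos : 0 < (1+A) - A*(z+y) := by
      rw [div_lt_div_iff₀ h2A h2A] at hylt
      rw [lt_div_iff₀ h2A] at hzlt
      nlinarith
    rcases mul_eq_zero.mp hfac with h | h
    · linarith
    · linarith
  · -- case μ > (1+A)^2/(4A)
    have hμ1 : 1 < μ := lt_trans hM1 hμ
    have hMμ : (1+A)^2 < μ * (4*A) := (div_lt_iff₀ (by linarith)).mp hμ
    have hD : 0 < (A-1)^2 + 4*A*μ := by nlinarith
    set s := Real.sqrt ((A-1)^2 + 4*A*μ) with hs
    have hs2 : s^2 = (A-1)^2 + 4*A*μ := Real.sq_sqrt hD.le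
    have hsgt : A + 1 < s := by
      rw [hs, show A + 1 = Real.sqrt ((A+1)^2) by
        rw [Real.sqrt_sq (by linarith)]]
      apply Real.sqrt_lt_sqrt (by positivity)
      nlinarith
    set y := ((A-1) + s)/(2*A) with hy
    have hy1 : 1 < y := by
      rw [hy, lt_div_iff₀ h2A]; linarith
    have hyq : 2*A*y = (A-1) + s := by
      rw [hy]; field_simp
    have key : μ = y + A * (y - 1) * y := by
      have key4 : (4*A) * μ = (4*A) * (y + A * (y - 1) * y) := by
        linear_combination (-1) * hs2 + (-(2*A*y - (A-1) + s)) * hyq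
      exact mul_left_cancel₀ (by positivity) key4
    have habs : μ = y + A * |1 - y| * y := by
      rw [abs_of_nonpos (by linarith), neg_sub]; exact key
    refine ⟨y, habs, ?_, fun h => absurd h (by linarith), fun _ => hy1⟩
    intro z hz
    have hz1 : 1 < z := by
      by_contra h
      push_neg at h
      rw [abs_of_nonneg (by linarith)] at hz
      nlinarith [sq_nonneg ((1+A) - 2*A*z)]
    rw [abs_of_nonpos (by linarith), neg_sub] at hz
    have hzy : z + A*(z-1)*z = y + A*(y-1)*y := by linarith
    have hfac : (z - y) * (A*(z+y) + (1 - A)) = 0 := by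
      linear_combination hzy
    have hpos : 0 < A*(z+y) + (1 - A) := by nlinarith
    rcases mul_eq_zero.mp hfac with h | h
    · linarith
    · linarith
end

section
/- Let $0 < A < 1$ and $\mu \in \mathbb{R}$, and let $y^*$ be the unique real number with $\mu = y^* + A|1-y^*|y^*$. Then every differentiable function $y : [0, \infty) \to \mathbb{R}$ satisfying $\dot{y}(\tau) = \mu - y(\tau) - A|1 - y(\tau)| y(\tau)$ for all $\tau \ge 0$ converges to $y^*$ as $\tau \to \infty$. -/
private lemma stommel_key (A : ℝ) (hA0 : 0 < A) (hA1 : A < 1) (a b : ℝ) :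
    (1 - A) * (a - b) ^ 2 ≤
      ((a + A * |1 - a| * a) - (b + A * |1 - b| * b)) * (a - b) := by
  rcases le_total a 1 with h | h <;> rcases le_total b 1 with h' | h'
  · rw [abs_of_nonneg (by linarith : (0:ℝ) ≤ 1 - a),
      abs_of_nonneg (by linarith : (0:ℝ) ≤ 1 - b)]
    nlinarith [mul_nonneg (mul_nonneg hA0.le (sq_nonneg (a - b)))
      (show (0:ℝ) ≤ 2 - a - b by linarith)]
  · rw [abs_of_nonneg (by linarith : (0:ℝ) ≤ 1 - a),
      abs_of_nonpos (by linarith : 1 - b ≤ 0)]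
    have hb2 : (1:ℝ) ≤ b ^ 2 := by nlinarith
    nlinarith [mul_nonneg (mul_nonneg hA0.le (show (0:ℝ) ≤ b - a by linarith))
      (show (0:ℝ) ≤ (a - 1) ^ 2 + b ^ 2 - 1 by nlinarith [sq_nonneg (a - 1)])]
  · rw [abs_of_nonpos (by linarith : 1 - a ≤ 0),
      abs_of_nonneg (by linarith : (0:ℝ) ≤ 1 - b)]
    have ha2 : (1:ℝ) ≤ a ^ 2 := by nlinarith
    nlinarith [mul_nonneg (mul_nonneg hA0.le (show (0:ℝ) ≤ a - b by linarith))
      (show (0:ℝ) ≤ (a ^ 2 - 1) + (b - 1) ^ 2 by nlinarith [sq_nonneg (b - 1)])]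
  · rw [abs_of_nonpos (by linarith : 1 - a ≤ 0),
      abs_of_nonpos (by linarith : 1 - b ≤ 0)]
    nlinarith [mul_nonneg (mul_nonneg hA0.le (sq_nonneg (a - b)))
      (show (0:ℝ) ≤ a + b by linarith)]

/-- For `0 < A < 1`, every solution of the reduced Stommel equation
`ẏ = μ - y - A|1-y|y` on `[0,∞)` converges to the unique equilibrium `y*`. -/
theorem stommel_global_convergence_A_lt_one (A μ ystar : ℝ)
    (hA0 : 0 < A) (hA1 : A < 1)
    (hstar : μ = ystar + A * |1 - ystar| * ystar) :
    ∀ y : ℝ → ℝ,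
      (∀ τ ∈ Set.Ici (0 : ℝ),
        HasDerivWithinAt y (μ - y τ - A * |1 - y τ| * y τ) (Set.Ici 0) τ) →
      Filter.Tendsto y Filter.atTop (nhds ystar) := by
  intro y hy
  set c : ℝ := 1 - A with hc
  have hcpos : 0 < c := by simp [hc]; linarith
  set w : ℝ → ℝ := fun τ => (y τ - ystar) ^ 2 * Real.exp (2 * c * τ) with hwdef
  set W' : ℝ → ℝ := fun τ =>
    (2 * (y τ - ystar) * (μ - y τ - A * |1 - y τ| * y τ)) * Real.exp (2 * c * τ)
      + (y τ - ystar) ^ 2 * (2 * c * Real.exp (2 * c * τ)) with hW'def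
  have hw : ∀ τ ∈ Set.Ici (0 : ℝ), HasDerivWithinAt w (W' τ) (Set.Ici 0) τ := by
    intro τ hτ
    have hu : HasDerivWithinAt (fun t => (y t - ystar) ^ 2)
        (2 * (y τ - ystar) * (μ - y τ - A * |1 - y τ| * y τ)) (Set.Ici 0) τ := by
      have := ((hy τ hτ).sub_const ystar).fun_pow 2
      simpa [mul_comm, mul_assoc, mul_left_comm] using this
    have hg : HasDerivAt (fun t => Real.exp (2 * c * t)) (2 * c * Real.exp (2 * c * τ)) τ := by
      have h1 : HasDerivAt (fun t : ℝ => 2 * c * t) (2 * c) τ := by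
        simpa using (hasDerivAt_id τ).const_mul (2 * c)
      have hg0 := h1.exp
      rwa [mul_comm (Real.exp (2 * c * τ)) (2 * c)] at hg0
    exact hu.mul hg.hasDerivWithinAt
  have hanti : AntitoneOn w (Set.Ici (0 : ℝ)) := by
    apply antitoneOn_of_deriv_nonpos (convex_Ici 0)
    · exact fun τ hτ => (hw τ hτ).continuousWithinAt
    · intro τ hτ
      rw [interior_Ici] at hτ
      exact ((hw τ (Set.mem_Ici.mpr (le_of_lt hτ))).hasDerivAt (Ici_mem_nhds hτ)).differentiableAt.differentiableWithinAt
    · intro τ hτ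
      rw [interior_Ici] at hτ
      rw [((hw τ (Set.mem_Ici.mpr (le_of_lt hτ))).hasDerivAt (Ici_mem_nhds hτ)).deriv]
      have hkey := stommel_key A hA0 hA1 (y τ) ystar
      have hexp : 0 < Real.exp (2 * c * τ) := Real.exp_pos _
      have : 2 * (y τ - ystar) * (μ - y τ - A * |1 - y τ| * y τ)
          + (y τ - ystar) ^ 2 * (2 * c) ≤ 0 := by
        have hμ : μ - y τ - A * |1 - y τ| * y τ =
            -(((y τ + A * |1 - y τ| * y τ) - (ystar + A * |1 - ystar| * ystar))) := by
          rw [hstar]; ring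
        rw [hμ]
        nlinarith [hkey]
      have : W' τ = (2 * (y τ - ystar) * (μ - y τ - A * |1 - y τ| * y τ)
          + (y τ - ystar) ^ 2 * (2 * c)) * Real.exp (2 * c * τ) := by
        simp only [hW'def]; ring
      rw [this]
      exact mul_nonpos_of_nonpos_of_nonneg (by linarith) hexp.le
  -- bound: (y τ - ystar)^2 ≤ w 0 * exp (-(2c)τ)
  have hbound : ∀ τ : ℝ, 0 ≤ τ →
      (y τ - ystar) ^ 2 ≤ (y 0 - ystar) ^ 2 * Real.exp (-(2 * c) * τ) := by
    intro τ hτ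
    have h1 : w τ ≤ w 0 := hanti (Set.mem_Ici.mpr (le_refl 0)) (Set.mem_Ici.mpr hτ) hτ
    have h2 : w 0 = (y 0 - ystar) ^ 2 := by simp [hwdef]
    have hexp : 0 < Real.exp (2 * c * τ) := Real.exp_pos _
    have h3 : (y τ - ystar) ^ 2 * Real.exp (2 * c * τ) ≤ (y 0 - ystar) ^ 2 := by
      rw [← h2]; exact h1
    have h4 : Real.exp (-(2 * c) * τ) = (Real.exp (2 * c * τ))⁻¹ := by
      rw [← Real.exp_neg]; ring_nf
    rw [h4, le_mul_inv_iff₀ hexp]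
    linarith
  have hexp0 : Filter.Tendsto (fun τ : ℝ => (y 0 - ystar) ^ 2 * Real.exp (-(2 * c) * τ))
      Filter.atTop (nhds 0) := by
    have : Filter.Tendsto (fun τ : ℝ => Real.exp (-(2 * c) * τ)) Filter.atTop (nhds 0) := by
      apply Real.tendsto_exp_atBot.comp
      exact Filter.Tendsto.const_mul_atTop_of_neg (by linarith) Filter.tendsto_id
    simpa using this.const_mul ((y 0 - ystar) ^ 2)
  have hsq : Filter.Tendsto (fun τ => (y τ - ystar) ^ 2) Filter.atTop (nhds 0) := by
    apply tendsto_of_tendsto_of_tendsto_of_le_of_le' tendsto_const_nhds hexp0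
    · exact Filter.Eventually.of_forall fun τ => sq_nonneg _
    · filter_upwards [Filter.eventually_ge_atTop (0 : ℝ)] with τ hτ using hbound τ hτ
  have habs : Filter.Tendsto (fun τ => |y τ - ystar|) Filter.atTop (nhds 0) := by
    have := (Real.continuous_sqrt.tendsto 0).comp hsq
    simpa [Function.comp_def, Real.sqrt_sq_eq_abs] using this
  have hsub : Filter.Tendsto (fun τ => y τ - ystar) Filter.atTop (nhds 0) := by
    exact (tendsto_zero_iff_abs_tendsto_zero _).mpr habs
  have := hsub.add_const ystar
  simpa using this
end

section
/- Let $A > 1$ and $1 < \mu < (1+A)^2/(4A)$, and let $y_1 < y_2 < y_3$ be the three real solutions of $\mu = y + A|1-y|y$. Let $y : [0, \infty) \to \mathbb{R}$ be differentiable and satisfy $\dot{y}(\tau) = \mu - y(\tau) - A|1 - y(\tau)| y(\tau)$ for all $\tau \ge 0$. If $y(0) < y_2$ then $y(\tau) \to y_1$ as $\tau \to \infty$; if $y(0) > y_2$ then $y(\tau) \to y_3$ as $\tau \to \infty$; and if $y(0) = y_2$ then $y$ is constant. In particular, the outer equilibria $y_1$ and $y_3$ are stable and the middle equilibrium $y_2$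 is unstable. -/
open Set Filter

namespace StommelAux

lemma pos_of_no_zero {f : ℝ → ℝ} (hfc : Continuous f) {u w : ℝ}
    (hw : 0 < f w) (hz : ∀ x ∈ uIcc u w, f x ≠ 0) : 0 < f u := by
  rcases lt_trichotomy (f u) 0 with h | h | h
  · have h0 : (0 : ℝ) ∈ uIcc (f u) (f w) := by
      rw [mem_uIcc]; left; exact ⟨h.le, hw.le⟩
    obtain ⟨x, hx, hfx⟩ := intermediate_value_uIcc (hfc.continuousOn) h0
    exact absurd hfx (hz x hx)
  · exact absurd h (hz u left_mem_uIcc)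
  · exact h

section ODE

variable {f : ℝ → ℝ} {y : ℝ → ℝ}

lemma sol_contOn (hy : ∀ τ ∈ Ici (0:ℝ), HasDerivWithinAt y (f (y τ)) (Ici 0) τ) :
    ContinuousOn y (Ici 0) := fun τ hτ => (hy τ hτ).continuousWithinAt

/-- a solution passing through an equilibrium is constant -/
lemma const_of_eq (hlip : ∀ R : ℝ, ∃ K : NNReal, LipschitzOnWith K f (Icc (-R) R))
    (hy : ∀ τ ∈ Ici (0:ℝ), HasDerivWithinAt y (f (y τ)) (Ici 0) τ)
    {c τ₀ : ℝ} (hc : f c = 0) (hτ₀ : 0 ≤ τ₀) (heq : y τ₀ = c) :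
    ∀ τ ∈ Ici (0:ℝ), y τ = c := by
  intro τ hτ
  have hτ' : (0:ℝ) ≤ τ := hτ
  rcases le_total τ₀ τ with hle | hle
  · -- forward in time
    have hsub : Icc τ₀ τ ⊆ Ici (0:ℝ) := fun x hx => le_trans hτ₀ hx.1
    obtain ⟨C, hC⟩ := (isCompact_Icc (a := τ₀) (b := τ)).exists_bound_of_continuousOn
      ((sol_contOn hy).mono hsub)
    set R : ℝ := max C |c| with hR
    obtain ⟨K, hK⟩ := hlip R
    have hcR : c ∈ Icc (-R) R :=
      mem_Icc.mpr (abs_le.mp (le_max_right _ _))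
    have key := ODE_solution_unique_of_mem_Icc_right (v := fun _ => f)
      (s := fun _ => Icc (-R) R) (K := K) (fun _ _ => hK)
      ((sol_contOn hy).mono hsub)
      (fun t ht => ((hy t (hsub (Ico_subset_Icc_self ht))).mono
        (Ici_subset_Ici.mpr (le_trans hτ₀ ht.1))))
      (fun t ht => mem_Icc.mpr (abs_le.mp (le_trans
        (by simpa [Real.norm_eq_abs] using hC t (Ico_subset_Icc_self ht)) (le_max_left _ _))))
      continuousOn_const
      (fun t _ => by simpa [hc] using (hasDerivWithinAt_const t (Ici t) c))
      (fun _ _ => hcR)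
      heq
    exact key ⟨hle, le_rfl⟩
  · -- backward in time
    have hsub : Icc τ τ₀ ⊆ Ici (0:ℝ) := fun x hx => le_trans hτ' hx.1
    obtain ⟨C, hC⟩ := (isCompact_Icc (a := τ) (b := τ₀)).exists_bound_of_continuousOn
      ((sol_contOn hy).mono hsub)
    set R : ℝ := max C |c| with hR
    obtain ⟨K, hK⟩ := hlip R
    have hcR : c ∈ Icc (-R) R :=
      mem_Icc.mpr (abs_le.mp (le_max_right _ _))
    have key := ODE_solution_unique_of_mem_Icc_left (v := fun _ => f)
      (s := fun _ => Icc (-R) R) (K := K) (fun _ _ => hK)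
      ((sol_contOn hy).mono hsub)
      (fun t ht => by
        have htpos : (0:ℝ) < t := lt_of_le_of_lt hτ' ht.1
        exact ((hy t htpos.le).hasDerivAt (Ici_mem_nhds htpos)).hasDerivWithinAt)
      (fun t ht => mem_Icc.mpr (abs_le.mp (le_trans
        (by simpa [Real.norm_eq_abs] using hC t (Ioc_subset_Icc_self ht)) (le_max_left _ _))))
      continuousOn_const
      (fun t _ => by simpa [hc] using (hasDerivWithinAt_const t (Iic t) c))
      (fun _ _ => hcR)
      heq
    exact key ⟨le_rfl, hle⟩

/-- a solution starting strictly below an equilibrium stays strictly below -/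
lemma stays_below (hlip : ∀ R : ℝ, ∃ K : NNReal, LipschitzOnWith K f (Icc (-R) R))
    (hy : ∀ τ ∈ Ici (0:ℝ), HasDerivWithinAt y (f (y τ)) (Ici 0) τ)
    {r : ℝ} (hr : f r = 0) (h0 : y 0 < r) : ∀ τ ∈ Ici (0:ℝ), y τ < r := by
  have hne : ∀ σ ∈ Ici (0:ℝ), y σ ≠ r := by
    intro σ hσ h
    have := const_of_eq hlip hy hr hσ h 0 (mem_Ici.mpr le_rfl)
    exact absurd this h0.ne
  intro τ hτ
  have hτ' : (0:ℝ) ≤ τ := hτ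
  rcases lt_or_ge (y τ) r with h | h
  · exact h
  · exfalso
    have hiv := intermediate_value_Icc hτ'
      ((sol_contOn hy).mono (fun x hx => le_trans le_rfl hx.1))
    have : r ∈ Icc (y 0) (y τ) := ⟨h0.le, h⟩
    obtain ⟨σ, hσ, hσr⟩ := hiv this
    exact hne σ hσ.1 hσr

/-- a solution starting strictly above an equilibrium stays strictly above -/
lemma stays_above (hlip : ∀ R : ℝ, ∃ K : NNReal, LipschitzOnWith K f (Icc (-R) R))
    (hy : ∀ τ ∈ Ici (0:ℝ), HasDerivWithinAt y (f (y τ)) (Ici 0) τ)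
    {r : ℝ} (hr : f r = 0) (h0 : r < y 0) : ∀ τ ∈ Ici (0:ℝ), r < y τ := by
  have hne : ∀ σ ∈ Ici (0:ℝ), y σ ≠ r := by
    intro σ hσ h
    have := const_of_eq hlip hy hr hσ h 0 (mem_Ici.mpr le_rfl)
    exact absurd this (ne_of_gt h0)
  intro τ hτ
  have hτ' : (0:ℝ) ≤ τ := hτ
  rcases lt_or_ge r (y τ) with h | h
  · exact h
  · exfalso
    have hiv := intermediate_value_Icc' hτ'
      ((sol_contOn hy).mono (fun x hx => le_trans le_rfl hx.1))
    have : r ∈ Icc (y τ) (y 0) := ⟨h, h0.le⟩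
    obtain ⟨σ, hσ, hσr⟩ := hiv this
    exact hne σ hσ.1 hσr

/-- monotonicity of a solution whose vector field is nonneg along it -/
lemma mono_sol (hy : ∀ τ ∈ Ici (0:ℝ), HasDerivWithinAt y (f (y τ)) (Ici 0) τ)
    (hpos : ∀ τ ∈ Ici (0:ℝ), 0 ≤ f (y τ)) : MonotoneOn y (Ici 0) := by
  apply monotoneOn_of_deriv_nonneg (convex_Ici 0) (sol_contOn hy)
  · intro x hx
    rw [interior_Ici] at hx
    exact (((hy x (le_of_lt hx : (0:ℝ) ≤ x)).hasDerivAt (Ici_mem_nhds hx)).differentiableAt).differentiableWithinAt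
  · intro x hx
    rw [interior_Ici] at hx
    rw [((hy x (le_of_lt hx : (0:ℝ) ≤ x)).hasDerivAt (Ici_mem_nhds hx)).deriv]
    exact hpos x (le_of_lt hx : (0:ℝ) ≤ x)

/-- antitonicity of a solution whose vector field is nonpos along it -/
lemma anti_sol (hy : ∀ τ ∈ Ici (0:ℝ), HasDerivWithinAt y (f (y τ)) (Ici 0) τ)
    (hneg : ∀ τ ∈ Ici (0:ℝ), f (y τ) ≤ 0) : AntitoneOn y (Ici 0) := by
  apply antitoneOn_of_deriv_nonpos (convex_Ici 0) (sol_contOn hy)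
  · intro x hx
    rw [interior_Ici] at hx
    exact (((hy x (le_of_lt hx : (0:ℝ) ≤ x)).hasDerivAt (Ici_mem_nhds hx)).differentiableAt).differentiableWithinAt
  · intro x hx
    rw [interior_Ici] at hx
    rw [((hy x (le_of_lt hx : (0:ℝ) ≤ x)).hasDerivAt (Ici_mem_nhds hx)).deriv]
    exact hneg x (le_of_lt hx : (0:ℝ) ≤ x)

/-- a monotone bounded-above solution converges -/
lemma converge_up (hm : MonotoneOn y (Ici 0)) {B : ℝ} (hb : ∀ τ ∈ Ici (0:ℝ), y τ ≤ B) :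
    ∃ L, Tendsto y atTop (nhds L) ∧ L ≤ B := by
  set z : ℝ → ℝ := fun τ => y (max τ 0) with hz
  have hmz : Monotone z := fun a b hab =>
    hm (mem_Ici.mpr (le_max_right a 0)) (mem_Ici.mpr (le_max_right b 0))
      (max_le_max hab le_rfl)
  have hbz : BddAbove (range z) := by
    refine ⟨B, ?_⟩
    rintro _ ⟨t, rfl⟩
    exact hb (max t 0) (le_max_right t 0)
  refine ⟨⨆ τ, z τ, ?_, ?_⟩
  · have h1 : Tendsto z atTop (nhds (⨆ τ, z τ)) := tendsto_atTop_ciSup hmz hbz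
    apply h1.congr'
    filter_upwards [eventually_ge_atTop (0:ℝ)] with t ht
    simp [hz, max_eq_left ht]
  · exact ciSup_le fun t => hb (max t 0) (le_max_right t 0)

/-- an antitone bounded-below solution converges -/
lemma converge_down (hm : AntitoneOn y (Ici 0)) {B : ℝ} (hb : ∀ τ ∈ Ici (0:ℝ), B ≤ y τ) :
    ∃ L, Tendsto y atTop (nhds L) ∧ B ≤ L := by
  set z : ℝ → ℝ := fun τ => y (max τ 0) with hz
  have hmz : Antitone z := fun a b hab =>
    hm (mem_Ici.mpr (le_max_right a 0)) (mem_Ici.mpr (le_max_right b 0))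
      (max_le_max hab le_rfl)
  have hbz : BddBelow (range z) := by
    refine ⟨B, ?_⟩
    rintro _ ⟨t, rfl⟩
    exact hb (max t 0) (le_max_right t 0)
  refine ⟨⨅ τ, z τ, ?_, ?_⟩
  · have h1 : Tendsto z atTop (nhds (⨅ τ, z τ)) := tendsto_atTop_ciInf hmz hbz
    apply h1.congr'
    filter_upwards [eventually_ge_atTop (0:ℝ)] with t ht
    simp [hz, max_eq_left ht]
  · exact le_ciInf fun t => hb (max t 0) (le_max_right t 0)

/-- the limit of a convergent solution is an equilibrium -/
lemma limit_root (hfc : Continuous f)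
    (hy : ∀ τ ∈ Ici (0:ℝ), HasDerivWithinAt y (f (y τ)) (Ici 0) τ)
    {L : ℝ} (hL : Tendsto y atTop (nhds L)) : f L = 0 := by
  by_contra hne
  have htf : Tendsto (fun τ => f (y τ)) atTop (nhds (f L)) := (hfc.tendsto L).comp hL
  set c := f L with hcdef
  -- auxiliary: a linear-drift comparison function
  rcases lt_or_gt_of_ne hne with hcneg | hcpos
  · -- c < 0 : y eventually decreases linearly, contradicting convergence
    have hev : ∀ᶠ τ in atTop, f (y τ) < c / 2 :=
      htf.eventually (eventually_lt_nhds (by linarith))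
    obtain ⟨T₀, hT₀⟩ := hev.exists_forall_of_atTop
    set T := max T₀ 0 with hT
    have hTnn : (0:ℝ) ≤ T := le_max_right _ _
    set g : ℝ → ℝ := fun τ => y τ - c / 2 * τ with hg
    have hganti : AntitoneOn g (Ici T) := by
      apply antitoneOn_of_deriv_nonpos (convex_Ici T)
      · exact ((sol_contOn hy).mono (fun x hx => le_trans hTnn hx)).sub
          (continuous_const.mul continuous_id).continuousOn
      · intro x hx
        rw [interior_Ici] at hx
        have hx0 : (0:ℝ) < x := lt_of_le_of_lt hTnn hx
        exact ((((hy x hx0.le).hasDerivAt (Ici_mem_nhds hx0)).sub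
          ((hasDerivAt_id x).const_mul (c/2))).differentiableAt).differentiableWithinAt
      · intro x hx
        rw [interior_Ici] at hx
        have hx0 : (0:ℝ) < x := lt_of_le_of_lt hTnn hx
        have hd : HasDerivAt g (f (y x) - c / 2 * 1) x :=
          (((hy x hx0.le).hasDerivAt (Ici_mem_nhds hx0))).sub
            ((hasDerivAt_id x).const_mul (c/2))
        rw [hd.deriv]
        have := hT₀ x (le_trans (le_max_left _ _) hx.le)
        linarith
    -- hence y τ ≤ g T + c/2 * τ for τ ≥ T
    have hyb : ∀ᶠ τ in atTop, y τ ≤ g T + c / 2 * τ := by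
      filter_upwards [eventually_ge_atTop T] with τ hτ
      have := hganti (mem_Ici.mpr le_rfl) (mem_Ici.mpr hτ) hτ
      simp only [hg] at this ⊢
      linarith
    have hlin : Tendsto (fun τ : ℝ => g T + c / 2 * τ) atTop atBot := by
      apply tendsto_atBot_add_const_left
      exact Tendsto.const_mul_atTop_of_neg (by linarith) tendsto_id
    have : Tendsto y atTop atBot := tendsto_atBot_mono' atTop hyb hlin
    exact not_tendsto_atBot_of_tendsto_nhds hL this
  · -- c > 0 : y eventually increases linearly
    have hev : ∀ᶠ τ in atTop, c / 2 < f (y τ) :=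
      htf.eventually (eventually_gt_nhds (by linarith))
    obtain ⟨T₀, hT₀⟩ := hev.exists_forall_of_atTop
    set T := max T₀ 0 with hT
    have hTnn : (0:ℝ) ≤ T := le_max_right _ _
    set g : ℝ → ℝ := fun τ => y τ - c / 2 * τ with hg
    have hgmono : MonotoneOn g (Ici T) := by
      apply monotoneOn_of_deriv_nonneg (convex_Ici T)
      · exact ((sol_contOn hy).mono (fun x hx => le_trans hTnn hx)).sub
          (continuous_const.mul continuous_id).continuousOn
      · intro x hx
        rw [interior_Ici] at hx
        have hx0 : (0:ℝ) < x := lt_of_le_of_lt hTnn hx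
        exact ((((hy x hx0.le).hasDerivAt (Ici_mem_nhds hx0)).sub
          ((hasDerivAt_id x).const_mul (c/2))).differentiableAt).differentiableWithinAt
      · intro x hx
        rw [interior_Ici] at hx
        have hx0 : (0:ℝ) < x := lt_of_le_of_lt hTnn hx
        have hd : HasDerivAt g (f (y x) - c / 2 * 1) x :=
          (((hy x hx0.le).hasDerivAt (Ici_mem_nhds hx0))).sub
            ((hasDerivAt_id x).const_mul (c/2))
        rw [hd.deriv]
        have := hT₀ x (le_trans (le_max_left _ _) hx.le)
        linarith
    have hyb : ∀ᶠ τ in atTop, g T + c / 2 * τ ≤ y τ := by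
      filter_upwards [eventually_ge_atTop T] with τ hτ
      have := hgmono (mem_Ici.mpr le_rfl) (mem_Ici.mpr hτ) hτ
      simp only [hg] at this ⊢
      linarith
    have hlin : Tendsto (fun τ : ℝ => g T + c / 2 * τ) atTop atTop := by
      apply tendsto_atTop_add_const_left
      exact Tendsto.const_mul_atTop (by linarith) tendsto_id
    have : Tendsto y atTop atTop := tendsto_atTop_mono' atTop hyb hlin
    exact not_tendsto_atTop_of_tendsto_nhds hL this

end ODE

noncomputable def F (A μ : ℝ) (u : ℝ) : ℝ := μ - u - A * |1 - u| * u

lemma F_cont (A μ : ℝ) : Continuous (F A μ) := by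
  unfold F; fun_prop

lemma neg_of_no_zero {f : ℝ → ℝ} (hfc : Continuous f) {u w : ℝ}
    (hw : f w < 0) (hz : ∀ x ∈ uIcc u w, f x ≠ 0) : f u < 0 := by
  have := pos_of_no_zero (f := fun x => -f x) hfc.neg (by simpa using hw)
    (fun x hx => by simpa using hz x hx)
  simpa using this


lemma F_lip (A μ : ℝ) (hA : 0 ≤ A) (R : ℝ) :
    ∃ K : NNReal, LipschitzOnWith K (F A μ) (Icc (-R) R) := by
  refine ⟨Real.toNNReal (1 + A * (1 + 2 * |R|)), ?_⟩
  rw [lipschitzOnWith_iff_dist_le_mul]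
  intro u hu v hv
  rw [Real.dist_eq, Real.dist_eq]
  have hcoe : ((Real.toNNReal (1 + A * (1 + 2 * |R|))) : ℝ) = 1 + A * (1 + 2 * |R|) := by
    rw [Real.coe_toNNReal]
    positivity
  rw [hcoe]
  have hu1 : |u| ≤ |R| := by
    rw [abs_le]
    exact ⟨le_trans (neg_le_neg (le_abs_self R)) hu.1, le_trans hu.2 (le_abs_self R)⟩
  have hv1 : |v| ≤ |R| := by
    rw [abs_le]
    exact ⟨le_trans (neg_le_neg (le_abs_self R)) hv.1, le_trans hv.2 (le_abs_self R)⟩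
  have e : F A μ u - F A μ v
      = -(u - v) - A * (|1 - u| * (u - v)) - A * ((|1 - u| - |1 - v|) * v) := by
    unfold F; ring
  have h1 : |(|1 - u| - |1 - v|)| ≤ |u - v| := by
    calc |(|1 - u| - |1 - v|)| ≤ |(1 - u) - (1 - v)| := abs_abs_sub_abs_le_abs_sub _ _
    _ = |u - v| := by rw [show (1:ℝ) - u - (1 - v) = -(u - v) by ring, abs_neg]
  have h2 : |1 - u| ≤ 1 + |R| := by
    calc |1 - u| ≤ |1| + |u| := abs_sub _ _
    _ ≤ 1 + |R| := by rw [abs_one]; linarith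
  calc |F A μ u - F A μ v|
      ≤ |-(u - v)| + |A * (|1 - u| * (u - v))| + |A * ((|1 - u| - |1 - v|) * v)| := by
        rw [e]; exact le_trans (abs_sub _ _) (by gcongr; exact abs_sub _ _)
    _ = |u - v| + A * (|1 - u| * |u - v|) + A * (|(|1 - u| - |1 - v|)| * |v|) := by
        rw [abs_neg, abs_mul, abs_mul, abs_mul, abs_mul, abs_of_nonneg hA, abs_abs]
    _ ≤ (1 + A * (1 + 2 * |R|)) * |u - v| := by
        have h3 : A * (|1 - u| * |u - v|) ≤ A * ((1 + |R|) * |u - v|) := by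
          gcongr
        have h4 : A * (|(|1 - u| - |1 - v|)| * |v|) ≤ A * (|u - v| * |R|) := by
          gcongr
        nlinarith [abs_nonneg (u - v), abs_nonneg R]



lemma F_pos_nonpos {A μ u : ℝ} (hA : 0 < A) (hμ : 0 < μ) (hu : u ≤ 0) : 0 < F A μ u := by
  unfold F
  rw [abs_of_nonneg (by linarith : (0:ℝ) ≤ 1 - u)]
  have hkey : A * (1 - u) * u ≤ 0 :=
    mul_nonpos_of_nonneg_of_nonpos (by nlinarith) hu
  linarith

lemma F_neg_ge_two {A μ u : ℝ} (hA : 1 < A) (hμ2 : μ < (1 + A) ^ 2 / (4 * A)) (hu : 2 ≤ u) :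
    F A μ u < 0 := by
  have hμ2' : μ * (4 * A) < (1 + A) ^ 2 := (lt_div_iff₀ (by linarith)).mp hμ2
  have h2 : μ < 2 + 2 * A := by
    by_contra h
    push_neg at h
    have h3 : (2 + 2 * A) * (4 * A) ≤ μ * (4 * A) := by nlinarith
    nlinarith
  unfold F
  rw [abs_of_nonpos (by linarith : 1 - u ≤ 0)]
  nlinarith [mul_nonneg (mul_nonneg (by linarith : (0:ℝ) ≤ A) (by linarith : (0:ℝ) ≤ u - 2))
    (by linarith : (0:ℝ) ≤ u + 1)]

lemma Fm_neg {A μ : ℝ} (hA : 1 < A) (hμ2 : μ < (1 + A) ^ 2 / (4 * A)) :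
    F A μ ((1 + A) / (2 * A)) < 0 := by
  have hA0 : (0:ℝ) < A := by linarith
  have hm1 : (1 + A) / (2 * A) < 1 := by
    rw [div_lt_one (by linarith)]; linarith
  unfold F
  rw [abs_of_nonneg (by linarith : (0:ℝ) ≤ 1 - (1 + A) / (2 * A))]
  have key : (1 + A) / (2 * A) + A * (1 - (1 + A) / (2 * A)) * ((1 + A) / (2 * A))
      = (1 + A) ^ 2 / (4 * A) := by
    field_simp
    ring
  linarith

lemma F_one {A μ : ℝ} (hμ : 1 < μ) : 0 < F A μ 1 := by
  unfold F; simp; linarith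


end StommelAux

open Set Filter StommelAux in
/-- Bistability of the reduced Stommel equation for `A > 1` and
`1 < μ < (1+A)²/(4A)`: solutions starting below the middle equilibrium `y₂`
converge to `y₁`, those starting above converge to `y₃`, and those starting at
`y₂` stay there; the outer equilibria are stable and the middle one unstable. -/
theorem stommel_bistable_convergence (A μ y₁ y₂ y₃ : ℝ) (hA : 1 < A)
    (hμ1 : 1 < μ) (hμ2 : μ < (1 + A) ^ 2 / (4 * A))
    (h12 : y₁ < y₂) (h23 : y₂ < y₃)
    (hy₁ : μ = y₁ + A * |1 - y₁| * y₁)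
    (hy₂ : μ = y₂ + A * |1 - y₂| * y₂)
    (hy₃ : μ = y₃ + A * |1 - y₃| * y₃)
    (honly : ∀ y : ℝ, μ = y + A * |1 - y| * y → (y = y₁ ∨ y = y₂ ∨ y = y₃))
    (y : ℝ → ℝ)
    (hode : ∀ τ ∈ Set.Ici (0 : ℝ),
      HasDerivWithinAt y (μ - y τ - A * |1 - y τ| * y τ) (Set.Ici 0) τ) :
    (y 0 < y₂ → Filter.Tendsto y Filter.atTop (nhds y₁)) ∧
    (y 0 > y₂ → Filter.Tendsto y Filter.atTop (nhds y₃)) ∧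
    (y 0 = y₂ → ∀ τ ∈ Set.Ici (0 : ℝ), y τ = y₂) := by
  have hA0 : (0:ℝ) < A := by linarith
  have hfc := F_cont A μ
  have hlip := F_lip A μ (by linarith)
  have hode' : ∀ τ ∈ Ici (0:ℝ), HasDerivWithinAt y (F A μ (y τ)) (Ici 0) τ :=
    fun τ hτ => hode τ hτ
  have hr₁ : F A μ y₁ = 0 := by unfold F; linarith
  have hr₂ : F A μ y₂ = 0 := by unfold F; linarith
  have hr₃ : F A μ y₃ = 0 := by unfold F; linarith
  have hroots : ∀ u, F A μ u = 0 → u = y₁ ∨ u = y₂ ∨ u = y₃ := by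
    intro u h
    apply honly
    unfold F at h
    linarith
  -- witnesses
  set w₁ := min 0 (y₁ - 1) with hw₁def
  have hw₁lt : w₁ < y₁ := lt_of_le_of_lt (min_le_right _ _) (by linarith)
  have hFw₁ : 0 < F A μ w₁ := F_pos_nonpos hA0 (by linarith) (min_le_left _ _)
  set w₃ := max 2 (y₃ + 1) with hw₃def
  have hw₃gt : y₃ < w₃ := lt_of_lt_of_le (by linarith) (le_max_right _ _)
  have hFw₃ : F A μ w₃ < 0 := F_neg_ge_two hA hμ2 (le_max_left _ _)
  set m := (1 + A) / (2 * A) with hmdef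
  have hm1 : m < 1 := by rw [hmdef, div_lt_one (by linarith)]; linarith
  have hFm : F A μ m < 0 := Fm_neg hA hμ2
  have hF1 : 0 < F A μ 1 := F_one hμ1
  -- sign of F below y₁
  have signlow : ∀ u, u < y₁ → 0 < F A μ u := by
    intro u hu
    apply pos_of_no_zero hfc hFw₁
    intro x hx hFx
    have hxlt : x < y₁ := lt_of_le_of_lt hx.2 (max_lt hu hw₁lt)
    rcases hroots x hFx with rfl | rfl | rfl <;> linarith
  -- sign of F above y₃
  have signhigh : ∀ u, y₃ < u → F A μ u < 0 := by
    intro u hu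
    apply neg_of_no_zero hfc hFw₃
    intro x hx hFx
    have hxgt : y₃ < x := lt_of_lt_of_le (lt_min hu hw₃gt) hx.1
    rcases hroots x hFx with rfl | rfl | rfl <;> linarith
  -- ordering facts
  have hy₁m : y₁ < m := by
    by_contra h
    push_neg at h
    have hne : m ≠ y₁ := fun he => by rw [he, hr₁] at hFm; exact lt_irrefl 0 hFm
    exact absurd (signlow m (lt_of_le_of_ne h hne)) (not_lt.mpr hFm.le)
  have h1y₃ : 1 < y₃ := by
    by_contra h
    push_neg at h
    have hne : y₃ ≠ 1 := fun he => by rw [← he, hr₃] at hF1; exact lt_irrefl 0 hF1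
    exact absurd (signhigh 1 (lt_of_le_of_ne h hne)) (not_lt.mpr hF1.le)
  have hy₂1 : y₂ < 1 := by
    by_contra h
    push_neg at h
    have hne : (1:ℝ) ≠ y₂ := fun he => by rw [he, hr₂] at hF1; exact lt_irrefl 0 hF1
    have h1y₂ : 1 < y₂ := lt_of_le_of_ne h hne
    have : 0 < F A μ m := by
      apply pos_of_no_zero hfc hF1
      intro x hx hFx
      have hge : y₁ < x := lt_of_lt_of_le (lt_min hy₁m (by linarith)) hx.1
      have hle : x < y₂ := lt_of_le_of_lt hx.2 (max_lt (hm1.trans h1y₂) h1y₂)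
      rcases hroots x hFx with rfl | rfl | rfl <;> linarith
    linarith
  have hmy₂ : m < y₂ := by
    by_contra h
    push_neg at h
    have hne : m ≠ y₂ := fun he => by rw [he, hr₂] at hFm; exact lt_irrefl 0 hFm
    have hy₂m : y₂ < m := lt_of_le_of_ne h (Ne.symm hne)
    have : 0 < F A μ m := by
      apply pos_of_no_zero hfc hF1
      intro x hx hFx
      have hge : y₂ < x := lt_of_lt_of_le (lt_min hy₂m (by linarith)) hx.1
      have hle : x < y₃ := lt_of_le_of_lt hx.2 (max_lt (by linarith) h1y₃)
      rcases hroots x hFx with rfl | rfl | rfl <;> linarith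
    linarith
  -- sign of F on (y₁, y₂)
  have sign12 : ∀ u, y₁ < u → u < y₂ → F A μ u < 0 := by
    intro u hu1 hu2
    apply neg_of_no_zero hfc hFm
    intro x hx hFx
    have hge : y₁ < x := lt_of_lt_of_le (lt_min hu1 hy₁m) hx.1
    have hle : x < y₂ := lt_of_le_of_lt hx.2 (max_lt hu2 hmy₂)
    rcases hroots x hFx with rfl | rfl | rfl <;> linarith
  -- sign of F on (y₂, y₃)
  have sign23 : ∀ u, y₂ < u → u < y₃ → 0 < F A μ u := by
    intro u hu1 hu2
    apply pos_of_no_zero hfc hF1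
    intro x hx hFx
    have hge : y₂ < x := lt_of_lt_of_le (lt_min hu1 hy₂1) hx.1
    have hle : x < y₃ := lt_of_le_of_lt hx.2 (max_lt hu2 h1y₃)
    rcases hroots x hFx with rfl | rfl | rfl <;> linarith
  refine ⟨?_, ?_, ?_⟩
  · -- y 0 < y₂ : converge to y₁
    intro h0
    rcases lt_trichotomy (y 0) y₁ with h | h | h
    · -- start below y₁
      have hb := stays_below hlip hode' hr₁ h
      have hmono := mono_sol hode' (fun τ hτ => (signlow (y τ) (hb τ hτ)).le)
      obtain ⟨L, hLt, hLb⟩ := converge_up hmono (fun τ hτ => (hb τ hτ).le)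
      have hFL := limit_root hfc hode' hLt
      obtain rfl | rfl | rfl := hroots L hFL
      · exact hLt
      · exact absurd hLb (not_le.mpr h12)
      · exact absurd hLb (not_le.mpr (h12.trans h23))
    · -- start at y₁
      have hc := const_of_eq hlip hode' hr₁ le_rfl h
      apply (tendsto_const_nhds (α := ℝ) (x := y₁)).congr'
      filter_upwards [eventually_ge_atTop (0:ℝ)] with τ hτ
      exact (hc τ hτ).symm
    · -- start in (y₁, y₂)
      have hb := stays_above hlip hode' hr₁ h
      have hb2 := stays_below hlip hode' hr₂ h0
      have hanti := anti_sol hode' (fun τ hτ => (sign12 (y τ) (hb τ hτ) (hb2 τ hτ)).le)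
      obtain ⟨L, hLt, hLb⟩ := converge_down hanti (fun τ hτ => (hb τ hτ).le)
      have hupper : L ≤ y 0 := by
        apply le_of_tendsto hLt
        filter_upwards [eventually_ge_atTop (0:ℝ)] with τ hτ
        exact hanti (mem_Ici.mpr le_rfl) (mem_Ici.mpr hτ) hτ
      have hFL := limit_root hfc hode' hLt
      obtain rfl | rfl | rfl := hroots L hFL
      · exact hLt
      · linarith
      · linarith
  · -- y 0 > y₂ : converge to y₃
    intro h0
    rcases lt_trichotomy (y 0) y₃ with h | h | h
    · -- start in (y₂, y₃)
      have hb := stays_above hlip hode' hr₂ h0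
      have hb2 := stays_below hlip hode' hr₃ h
      have hmono := mono_sol hode' (fun τ hτ => (sign23 (y τ) (hb τ hτ) (hb2 τ hτ)).le)
      obtain ⟨L, hLt, hLb⟩ := converge_up hmono (fun τ hτ => (hb2 τ hτ).le)
      have hlower : y 0 ≤ L := by
        apply ge_of_tendsto hLt
        filter_upwards [eventually_ge_atTop (0:ℝ)] with τ hτ
        exact hmono (mem_Ici.mpr le_rfl) (mem_Ici.mpr hτ) hτ
      have hFL := limit_root hfc hode' hLt
      obtain rfl | rfl | rfl := hroots L hFL
      · linarith
      · linarith
      · exact hLt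
    · -- start at y₃
      have hc := const_of_eq hlip hode' hr₃ le_rfl h
      apply (tendsto_const_nhds (α := ℝ) (x := y₃)).congr'
      filter_upwards [eventually_ge_atTop (0:ℝ)] with τ hτ
      exact (hc τ hτ).symm
    · -- start above y₃
      have hb := stays_above hlip hode' hr₃ h
      have hanti := anti_sol hode' (fun τ hτ => (signhigh (y τ) (hb τ hτ)).le)
      obtain ⟨L, hLt, hLb⟩ := converge_down hanti (fun τ hτ => (hb τ hτ).le)
      have hFL := limit_root hfc hode' hLt
      obtain rfl | rfl | rfl := hroots L hFL
      · linarith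
      · linarith
      · exact hLt
  · -- y 0 = y₂ : stay at y₂
    intro h0
    exact const_of_eq hlip hode' hr₂ le_rfl h0
end
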